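/- Let V be a finite-dimensional real vector space and A : V → V a linear automorphism all of whose (complex) eigenvalues have modulus different from one. Then there is an A-invariant direct sum decomposition V = E⁻ ⊕ E⁺ and a positive integer p₀ such that for all p ≥ p₀, ‖Aᵖ v‖ ≤ (1/2)‖v‖ for all v ∈ E⁻, and ‖Aᵖ v‖ ≥ 2‖v‖ for all v ∈ E⁺. -/

import Mathlib

open TensorProduct

open Filter Polynomial
open scoped ENNReal NNReal

open Module.End in
set_option maxHeartbeats 1000000 in
lemma aux_contract {W : Type*} [NormedAddCommGroup W] [NormedSpace ℝ W] [FiniteDimensional ℝ W]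
    (T : W →ₗ[ℝ] W)
    (h : ∀ z : ℂ, Module.End.HasEigenvalue (T.baseChange ℂ) z → ‖z‖ < 1) :
    ∀ᶠ p : ℕ in atTop, ∀ v : W, ‖(T ^ p) v‖ ≤ (1/2) * ‖v‖ := by
  rcases subsingleton_or_nontrivial W with hW | hW
  · filter_upwards with p v
    have hv : v = 0 := Subsingleton.elim _ _
    simp [hv]
  · set n := Module.finrank ℂ (ℂ ⊗[ℝ] W) with hn
    have hn0 : 0 < n := by
      rw [hn, Module.finrank_baseChange]
      exact Module.finrank_pos
    haveI : Nonempty (Fin n) := ⟨⟨0, hn0⟩⟩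
    let e : (ℂ ⊗[ℝ] W) ≃ₗ[ℂ] (Fin n → ℂ) := (Module.finBasis ℂ (ℂ ⊗[ℝ] W)).equivFun
    let Mlin : Module.End ℂ (Fin n → ℂ) := e.conj (T.baseChange ℂ)
    let M : (Fin n → ℂ) →L[ℂ] (Fin n → ℂ) := LinearMap.toContinuousLinearMap Mlin
    have hMcoe : (M : (Fin n → ℂ) →ₗ[ℂ] (Fin n → ℂ)) = Mlin := rfl
    have heig : ∀ z : ℂ, Module.End.HasEigenvalue Mlin z →
        Module.End.HasEigenvalue (T.baseChange ℂ) z := by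
      intro z hz
      obtain ⟨x, hx, hx0⟩ := hz.exists_hasEigenvector
      refine Module.End.hasEigenvalue_of_hasEigenvector
        (x := e.symm x) ⟨Module.End.mem_eigenspace_iff.2 ?_, by simp [hx0]⟩
      have : Mlin x = z • x := Module.End.mem_eigenspace_iff.1 hx
      have h2 : e ((T.baseChange ℂ) (e.symm x)) = z • x := by
        simpa [Mlin, LinearEquiv.conj_apply] using this
      calc (T.baseChange ℂ) (e.symm x) = e.symm (e ((T.baseChange ℂ) (e.symm x))) := by simp
        _ = z • e.symm x := by rw [h2]; simp
    have hspec : ∀ z ∈ spectrum ℂ M, ‖z‖₊ < 1 := by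
      intro z hz
      have hzE : z ∈ spectrum ℂ Mlin := by
        by_contra hzn
        rw [spectrum.notMem_iff] at hzn
        obtain ⟨u, hu⟩ := hzn
        apply spectrum.notMem_iff.2 _ hz
        refine ⟨⟨algebraMap ℂ _ z - M, LinearMap.toContinuousLinearMap u.inv, ?_, ?_⟩, rfl⟩
        · refine ContinuousLinearMap.ext fun x => ?_
          have h1 : ((algebraMap ℂ (Module.End ℂ (Fin n → ℂ)) z - Mlin) * u.inv) x = x := by
            rw [← hu, u.val_inv]; rfl
          simpa [ContinuousLinearMap.mul_apply, Module.End.mul_apply,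
            Module.algebraMap_end_apply, ContinuousLinearMap.sub_apply,
            Algebra.algebraMap_eq_smul_one, M] using h1
        · refine ContinuousLinearMap.ext fun x => ?_
          have h1 : (u.inv * (algebraMap ℂ (Module.End ℂ (Fin n → ℂ)) z - Mlin)) x = x := by
            rw [← hu, u.inv_val]; rfl
          simpa [ContinuousLinearMap.mul_apply, Module.End.mul_apply,
            Module.algebraMap_end_apply, ContinuousLinearMap.sub_apply,
            Algebra.algebraMap_eq_smul_one, M] using h1
      have := h z (heig z (Module.End.hasEigenvalue_iff_mem_spectrum.2 hzE))
      exact_mod_cast this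
    haveI : Nontrivial ((Fin n → ℂ) →L[ℂ] (Fin n → ℂ)) := by
      refine nontrivial_of_ne 1 0 ?_
      intro hcontra
      obtain ⟨x, hx⟩ := exists_ne (0 : Fin n → ℂ)
      have := congrArg (fun (f : (Fin n → ℂ) →L[ℂ] (Fin n → ℂ)) => f x) hcontra
      simp at this
      exact hx this
    have hr : spectralRadius ℂ M < 1 := by
      have := spectrum.spectralRadius_lt_of_forall_lt M hspec
      simpa using this
    obtain ⟨c, hc1, hc2⟩ := exists_between hr
    have hcne : c ≠ ⊤ := (hc2.trans_le le_top).ne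
    have hgel := spectrum.pow_nnnorm_pow_one_div_tendsto_nhds_spectralRadius M
    have hev : ∀ᶠ p : ℕ in atTop, (‖M ^ p‖₊ : ENNReal) ^ (1/(p:ℝ)) < c :=
      hgel.eventually_lt_const hc1
    set c' : ℝ := c.toReal with hc'
    have hc'1 : c' < 1 := by
      have := (ENNReal.toReal_lt_toReal hcne ENNReal.one_ne_top).2 hc2
      simpa using this
    have hc'0 : 0 ≤ c' := ENNReal.toReal_nonneg
    have hbound : ∀ᶠ p : ℕ in atTop, ‖M ^ p‖ ≤ c' ^ p := by
      filter_upwards [hev, eventually_ge_atTop 1] with p hp hp1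
      have hppos : (0:ℝ) < p := by exact_mod_cast hp1
      have h1 : (‖M ^ p‖₊ : ENNReal) < c ^ (p:ℝ) := by
        have := ENNReal.rpow_lt_rpow hp hppos
        rwa [← ENNReal.rpow_mul, one_div_mul_cancel hppos.ne', ENNReal.rpow_one] at this

      have hne : c ^ (p:ℝ) ≠ ⊤ := ENNReal.rpow_ne_top_of_nonneg hppos.le hcne
      have h2 : ‖M ^ p‖ ≤ (c ^ (p:ℝ)).toReal := by
        have := ENNReal.toReal_mono hne h1.le
        simpa using this
      calc ‖M ^ p‖ ≤ (c ^ (p:ℝ)).toReal := h2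
        _ = c' ^ (p:ℝ) := (ENNReal.toReal_rpow c (p:ℝ)).symm
        _ = c' ^ p := Real.rpow_natCast c' p
    have hM0 : Tendsto (fun p : ℕ => ‖M ^ p‖) atTop (nhds 0) := by
      refine squeeze_zero' (by filter_upwards with p; positivity) hbound ?_
      exact tendsto_pow_atTop_nhds_zero_of_lt_one hc'0 hc'1
    -- comparison maps
    let ι : W →ₗ[ℝ] ℂ ⊗[ℝ] W := (TensorProduct.mk ℝ ℂ W) 1
    let j : W →ₗ[ℝ] (Fin n → ℂ) := (e.restrictScalars ℝ).toLinearMap ∘ₗ ι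
    let φ : ℂ →ₗ[ℝ] (W →ₗ[ℝ] W) := Complex.reLm.smulRight LinearMap.id
    let ρ0 : (ℂ ⊗[ℝ] W) →ₗ[ℝ] W := TensorProduct.lift φ
    let ρ : (Fin n → ℂ) →ₗ[ℝ] W := ρ0 ∘ₗ (e.symm.restrictScalars ℝ).toLinearMap
    have hρj : ∀ v : W, ρ (j v) = v := by
      intro v
      simp [ρ, j, ι, ρ0, φ, TensorProduct.lift.tmul]
    have hjT : ∀ v : W, j (T v) = Mlin (j v) := by
      intro v
      have h1 : (T.baseChange ℂ) ((1:ℂ) ⊗ₜ[ℝ] v) = (1:ℂ) ⊗ₜ[ℝ] (T v) := by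
        simp
      simp only [j, ι, LinearMap.comp_apply, LinearEquiv.coe_coe,
        LinearEquiv.restrictScalars_apply, TensorProduct.mk_apply, Mlin,
        LinearEquiv.conj_apply, LinearMap.comp_apply]
      rw [← h1]
      simp
    have hjTp : ∀ (p : ℕ) (v : W), j ((T ^ p) v) = (Mlin ^ p) (j v) := by
      intro p
      induction p with
      | zero => intro v; simp
      | succ q ih =>
        intro v
        have hTv : (T ^ (q+1)) v = (T ^ q) (T v) := by
          rw [pow_succ, Module.End.mul_apply]
        rw [hTv, ih (T v), hjT v, pow_succ, Module.End.mul_apply]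
    let jc : W →L[ℝ] (Fin n → ℂ) := LinearMap.toContinuousLinearMap j
    let ρc : (Fin n → ℂ) →L[ℝ] W := LinearMap.toContinuousLinearMap ρ
    have hpow : ∀ (p : ℕ) (x : Fin n → ℂ), (Mlin ^ p) x = (M ^ p) x := by
      intro p
      induction p with
      | zero => intro x; rfl
      | succ q ih =>
        intro x
        rw [pow_succ, pow_succ, Module.End.mul_apply, ContinuousLinearMap.mul_apply,
          ih (Mlin x)]
        rfl
    have key : ∀ (p : ℕ) (v : W), ‖(T ^ p) v‖ ≤ ‖ρc‖ * ‖M ^ p‖ * ‖jc‖ * ‖v‖ := by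
      intro p v
      have h1 : (T ^ p) v = ρ ((Mlin ^ p) (j v)) := by
        rw [← hjTp p v, hρj]
      calc ‖(T ^ p) v‖ = ‖ρc ((M ^ p) (j v))‖ := by rw [h1, hpow p (j v)]; rfl
        _ ≤ ‖ρc‖ * ‖(M ^ p) (j v)‖ := ρc.le_opNorm _
        _ ≤ ‖ρc‖ * (‖M ^ p‖ * ‖jc v‖) := by
            refine mul_le_mul_of_nonneg_left ?_ (norm_nonneg _)
            exact (M ^ p).le_opNorm _
        _ ≤ ‖ρc‖ * (‖M ^ p‖ * (‖jc‖ * ‖v‖)) := by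
            refine mul_le_mul_of_nonneg_left (mul_le_mul_of_nonneg_left
              (jc.le_opNorm _) (norm_nonneg _)) (norm_nonneg _)
        _ = ‖ρc‖ * ‖M ^ p‖ * ‖jc‖ * ‖v‖ := by ring
    have hK : Tendsto (fun p : ℕ => ‖ρc‖ * ‖M ^ p‖ * ‖jc‖) atTop (nhds 0) := by
      have h4 := (hM0.const_mul ‖ρc‖).mul_const ‖jc‖
      rw [mul_zero, zero_mul] at h4
      exact h4
    filter_upwards [hK.eventually_le_const (by norm_num : (0:ℝ) < 1/2)] with p hp v
    exact le_trans (key p v) (mul_le_mul_of_nonneg_right hp (norm_nonneg v))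

lemma aux_eig_of_root {K X : Type*} [Field K] [AddCommGroup X] [Module K X]
    [FiniteDimensional K X] (φ : X →ₗ[K] X) {z : K}
    (hz : (LinearMap.charpoly φ).IsRoot z) : Module.End.HasEigenvalue φ z := by
  classical
  let b := Module.Free.chooseBasis K X
  set M' := LinearMap.toMatrix b b φ with hM'
  have hdet : LinearMap.det (z • (LinearMap.id : X →ₗ[K] X) - φ) = 0 := by
    rw [← LinearMap.det_toMatrix b]
    have h2 : LinearMap.toMatrix b b (z • LinearMap.id - φ)
        = (Matrix.charmatrix M').map (Polynomial.evalRingHom z) := by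
      ext i j
      by_cases hij : i = j
      · subst hij
        simp [Matrix.charmatrix_apply_eq, LinearMap.toMatrix_apply, Matrix.one_apply,
          hM', Finsupp.single_apply]
      · simp [Matrix.map_apply, Matrix.charmatrix_apply_ne _ _ _ hij,
          LinearMap.toMatrix_apply, hM', Finsupp.single_apply, Ne.symm hij]
    rw [h2, ← RingHom.mapMatrix_apply, ← RingHom.map_det]
    have h3 : M'.charpoly.eval z = 0 := by
      have h4 : M'.charpoly = LinearMap.charpoly φ := LinearMap.charpoly_toMatrix φ b
      rw [h4]
      exact hz
    exact h3
  have hker : ⊥ < LinearMap.ker (z • (LinearMap.id : X →ₗ[K] X) - φ) :=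
    LinearMap.bot_lt_ker_of_det_eq_zero hdet
  obtain ⟨v, hv, hv0⟩ := (Submodule.ne_bot_iff _).1 hker.ne'
  have hφv : φ v = z • v := by
    have := LinearMap.mem_ker.1 hv
    simp only [LinearMap.sub_apply, LinearMap.smul_apply, LinearMap.id_apply] at this
    exact (sub_eq_zero.1 this).symm
  exact Module.End.hasEigenvalue_of_hasEigenvector
    ⟨Module.End.mem_eigenspace_iff.2 hφv, hv0⟩

lemma aux_same_abs {q : ℝ[X]} (hq : Irreducible q) {z w : ℂ}
    (hz : (q.map (algebraMap ℝ ℂ)).IsRoot z) (hw : (q.map (algebraMap ℝ ℂ)).IsRoot w) :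
    ‖z‖ = ‖w‖ := by
  have hq0 : q ≠ 0 := hq.ne_zero
  have hmap0 : q.map (algebraMap ℝ ℂ) ≠ 0 := Polynomial.map_ne_zero hq0
  have haz : aeval z q = 0 := by rwa [aeval_def, ← eval_map]
  have haw : aeval w q = 0 := by rwa [aeval_def, ← eval_map]
  by_cases him : z.im = 0
  · -- z is real, q is linear up to unit, so w = z
    lift z to ℝ using him with r hr
    have hroot : q.IsRoot r := by
      have h8 := haz
      erw [Polynomial.aeval_ofReal, RCLike.ofReal_eq_zero] at h8
      exact h8
    have hdvd : X - C r ∣ q := Polynomial.dvd_iff_isRoot.2 hroot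
    obtain ⟨u, hu⟩ := hdvd
    have hun : IsUnit u := by
      rcases (hq.isUnit_or_isUnit hu).imp_left id with h | h
      · exact absurd h (by
          intro hcontra
          exact Polynomial.not_isUnit_X_sub_C r hcontra)
      · exact h
    obtain ⟨a, ha, hCa⟩ := Polynomial.isUnit_iff.1 hun
    have hqmap : q.map (algebraMap ℝ ℂ) = (X - C (r : ℂ)) * C ((a : ℝ) : ℂ) := by
      rw [hu, ← hCa]
      simp [Polynomial.map_mul]
    have ha0 : ((a : ℝ) : ℂ) ≠ 0 := by exact_mod_cast ha.ne_zero
    have hwz : w = (r : ℂ) := by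
      have := hw
      rw [hqmap] at this
      simp only [IsRoot, eval_mul, eval_sub, eval_X, eval_C, mul_eq_zero] at this
      rcases this with h | h
      · exact sub_eq_zero.1 h
      · exact absurd h ha0
    rw [hwz]
  · -- z nonreal: q.map = (X - C z̄)(X - C z) * unit
    have hdvd := q.mul_star_dvd_of_aeval_eq_zero_im_ne_zero haz him
    obtain ⟨s, hs⟩ := hdvd
    have hdeg2 : ((X - C ((starRingEnd ℂ) z)) * (X - C z)).degree = 2 := by
      rw [Polynomial.degree_mul, Polynomial.degree_X_sub_C, Polynomial.degree_X_sub_C]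
      rfl
    have hdegq : (q.map (algebraMap ℝ ℂ)).degree ≤ 2 := by
      rw [Polynomial.degree_map]
      exact hq.degree_le_two
    have hs0 : s ≠ 0 := by
      intro h0
      rw [h0, mul_zero] at hs
      exact hmap0 hs
    have h6 : (2:WithBot ℕ) + s.degree ≤ 2 + 0 := by
      have h7 : ((X - C ((starRingEnd ℂ) z)) * (X - C z) * s).degree ≤ 2 := hs ▸ hdegq
      rw [Polynomial.degree_mul, hdeg2] at h7
      simpa using h7
    have hsdeg : s.degree ≤ 0 :=
      (WithBot.add_le_add_iff_left (by simp : (2:WithBot ℕ) ≠ ⊥)).1 h6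
    have hsC := Polynomial.eq_C_of_degree_le_zero hsdeg
    set a := s.coeff 0 with ha
    rw [hsC] at hs hs0
    have ha0 : a ≠ 0 := fun h0 => hs0 (by rw [h0, map_zero])
    have h5 := hw
    rw [hs] at h5
    simp only [IsRoot, eval_mul, eval_sub, eval_X, eval_C, mul_eq_zero] at h5
    rcases h5 with (h | h) | h
    · rw [sub_eq_zero.1 h, Complex.norm_conj]
    · rw [sub_eq_zero.1 h]
    · exact absurd h ha0

lemma aux_aeval_restrict {V : Type*} [AddCommGroup V] [Module ℝ V] {p : Submodule ℝ V}
    (T : V →ₗ[ℝ] V) (h : ∀ x ∈ p, T x ∈ p) (q : ℝ[X]) (x : p) :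
    ((Polynomial.aeval (T.restrict h) q) x : V) = (Polynomial.aeval T q) (x : V) := by
  induction q using Polynomial.induction_on' with
  | add f g hf hg => simp only [map_add, LinearMap.add_apply, Submodule.coe_add, hf, hg]
  | monomial n c =>
    rw [Polynomial.aeval_monomial, Polynomial.aeval_monomial, Module.End.mul_apply,
      Module.End.mul_apply, Module.End.pow_restrict]
    simp [Module.algebraMap_end_apply, LinearMap.restrict_apply]

lemma aux_eigen_root {W : Type*} [AddCommGroup W] [Module ℝ W] [FiniteDimensional ℝ W]
    (S : W →ₗ[ℝ] W) (q : ℝ[X]) (hS : Polynomial.aeval S q = 0) {z : ℂ}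
    (hz : Module.End.HasEigenvalue (S.baseChange ℂ) z) :
    (q.map (algebraMap ℝ ℂ)).IsRoot z := by
  have h1 : Polynomial.aeval (S.baseChange ℂ) (q.map (algebraMap ℝ ℂ)) = 0 := by
    rw [Polynomial.aeval_map_algebraMap]
    have h2 := Polynomial.aeval_algHom_apply
      (Module.End.baseChangeHom (R := ℝ) (A := ℂ) (M := W)) S q
    have h3 : Module.End.baseChangeHom (R := ℝ) (A := ℂ) (M := W) S = S.baseChange ℂ := rfl
    rw [h3] at h2
    rw [h2, hS, map_zero]
  have h2 : minpoly ℂ (S.baseChange ℂ) ∣ q.map (algebraMap ℝ ℂ) := minpoly.dvd _ _ h1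
  exact (Module.End.hasEigenvalue_iff_isRoot.1 hz).dvd h2

/-- Lemma 2.1: a hyperbolic linear automorphism of a finite-dimensional real normed
space admits an invariant splitting `V = E⁻ ⊕ E⁺` and a power `p₀` such that all
higher powers contract `E⁻` by `1/2` and expand `E⁺` by `2`. -/
theorem stmt0 (V : Type*) [NormedAddCommGroup V] [NormedSpace ℝ V]
    [FiniteDimensional ℝ V] (A : V ≃ₗ[ℝ] V)
    (hyp : ∀ μ : ℂ, Module.End.HasEigenvalue
      ((A : V →ₗ[ℝ] V).baseChange ℂ) μ → ‖μ‖ ≠ 1) :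
    ∃ (Em Ep : Submodule ℝ V) (p₀ : ℕ), 0 < p₀ ∧ IsCompl Em Ep ∧
      Em.map (A : V →ₗ[ℝ] V) = Em ∧ Ep.map (A : V →ₗ[ℝ] V) = Ep ∧
      ∀ p : ℕ, p₀ ≤ p →
        (∀ v ∈ Em, ‖((A : V →ₗ[ℝ] V) ^ p) v‖ ≤ (1/2) * ‖v‖) ∧
        (∀ v ∈ Ep, 2 * ‖v‖ ≤ ‖((A : V →ₗ[ℝ] V) ^ p) v‖) := by
  classical
  set T : V →ₗ[ℝ] V := (A : V →ₗ[ℝ] V) with hT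
  set χ : ℝ[X] := LinearMap.charpoly T with hχ
  have hχ0 : χ ≠ 0 := (LinearMap.charpoly_monic T).ne_zero
  -- all complex roots of χ avoid the unit circle
  have hroot : ∀ z : ℂ, (χ.map (algebraMap ℝ ℂ)).IsRoot z → ‖z‖ ≠ 1 := by
    intro z hz
    apply hyp z
    have hbc : (T.baseChange ℂ).charpoly = χ.map (algebraMap ℝ ℂ) :=
      LinearMap.charpoly_baseChange T ℂ
    exact aux_eig_of_root (T.baseChange ℂ) (hbc ▸ hz)
  -- factor χ into small and large parts
  set fac := UniqueFactorizationMonoid.factors χ with hfac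
  set P : ℝ[X] → Prop := fun q => ∀ z : ℂ,
    (q.map (algebraMap ℝ ℂ)).IsRoot z → ‖z‖ < 1 with hP
  set f : ℝ[X] := (fac.filter P).prod with hf
  set g : ℝ[X] := (fac.filter (fun q => ¬ P q)).prod with hg
  have hfg : f * g = fac.prod := Multiset.prod_filter_mul_prod_filter_not (s := fac) P
  have hassoc : Associated (f * g) χ := by
    rw [hfg]
    exact UniqueFactorizationMonoid.factors_prod hχ0
  -- root locations
  have hmem_root : ∀ q ∈ fac, ∀ z : ℂ, (q.map (algebraMap ℝ ℂ)).IsRoot z →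
      ‖z‖ ≠ 1 := by
    intro q hq z hz
    have hdvd : q ∣ χ := UniqueFactorizationMonoid.dvd_of_mem_factors hq
    exact hroot z (hz.dvd (Polynomial.map_dvd _ hdvd))
  have hroot_of_filter : ∀ (s : Multiset ℝ[X]) (z : ℂ),
      (s.prod.map (algebraMap ℝ ℂ)).IsRoot z →
      ∃ q ∈ s, (q.map (algebraMap ℝ ℂ)).IsRoot z := by
    intro s z hz
    have h1 : (s.prod.map (algebraMap ℝ ℂ))
        = (s.map (Polynomial.map (algebraMap ℝ ℂ))).prod := by
      rw [← Polynomial.coe_mapRingHom, map_multiset_prod]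
    rw [Polynomial.IsRoot, h1, Polynomial.eval_multiset_prod, Multiset.map_map] at hz
    obtain ⟨q, hq, hq0⟩ := Multiset.mem_map.1 (Multiset.prod_eq_zero_iff.1 hz)
    exact ⟨q, hq, hq0⟩
  have hfroots : ∀ z : ℂ, (f.map (algebraMap ℝ ℂ)).IsRoot z → ‖z‖ < 1 := by
    intro z hz
    obtain ⟨q, hq, hqz⟩ := hroot_of_filter _ z hz
    rw [Multiset.mem_filter] at hq
    exact hq.2 z hqz
  have hgroots : ∀ z : ℂ, (g.map (algebraMap ℝ ℂ)).IsRoot z → 1 < ‖z‖ := by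
    intro z hz
    obtain ⟨q, hq, hqz⟩ := hroot_of_filter _ z hz
    rw [Multiset.mem_filter] at hq
    have hqirr : Irreducible q := UniqueFactorizationMonoid.irreducible_of_factor q hq.1
    have hnp : ¬ P q := hq.2
    rw [hP] at hnp
    have hnp2 : ∃ z : ℂ, (Polynomial.map (algebraMap ℝ ℂ) q).IsRoot z ∧
        ¬ ‖z‖ < 1 := by
      by_contra hco
      push_neg at hco
      exact hnp (fun z hz => hco z hz)
    obtain ⟨w, hw, hw1'⟩ := hnp2
    have hw1 : 1 ≤ ‖w‖ := not_lt.1 hw1'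
    have hwne : ‖w‖ ≠ 1 := hmem_root q hq.1 w hw
    have hw2 : 1 < ‖w‖ := lt_of_le_of_ne hw1 (Ne.symm hwne)
    rwa [aux_same_abs hqirr hqz hw]
  -- f and g are nonzero
  have hprodne : ∀ s : Multiset ℝ[X], (∀ q ∈ s, q ∈ fac) → s.prod ≠ 0 := by
    intro s hs h0
    have h1 : (0:ℝ[X]) ∈ s := Multiset.prod_eq_zero_iff.1 h0
    exact not_irreducible_zero
      (UniqueFactorizationMonoid.irreducible_of_factor _ (hs _ h1))
  have hfne : f ≠ 0 := hprodne _ (fun q hq => (Multiset.mem_filter.1 hq).1)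
  have hgne : g ≠ 0 := hprodne _ (fun q hq => (Multiset.mem_filter.1 hq).1)
  -- coprimality
  have hcop : IsCoprime f g := by
    by_contra hnc
    rw [← EuclideanDomain.gcd_isUnit_iff] at hnc
    have hgcd0 : EuclideanDomain.gcd f g ≠ 0 := by
      intro h0
      exact hfne ((EuclideanDomain.gcd_eq_zero_iff.1 h0).1)
    obtain ⟨r, hrirr, hrd⟩ := WfDvdMonoid.exists_irreducible_factor hnc hgcd0
    have hrf : r ∣ f := hrd.trans (EuclideanDomain.gcd_dvd_left f g)
    have hrg : r ∣ g := hrd.trans (EuclideanDomain.gcd_dvd_right f g)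
    have hrp : Prime r := hrirr.prime
    obtain ⟨q, hq, hrq⟩ := hrp.exists_mem_multiset_dvd hrf
    obtain ⟨q', hq', hrq'⟩ := hrp.exists_mem_multiset_dvd hrg
    rw [Multiset.mem_filter] at hq hq'
    apply hq'.2
    intro z hz
    have hq'irr : Irreducible q' := UniqueFactorizationMonoid.irreducible_of_factor q' hq'.1
    have hassoc' : Associated r q' := hrirr.associated_of_dvd hq'irr hrq'
    have hq'q : q' ∣ q := (hassoc'.symm.dvd).trans hrq
    exact hq.2 z (hz.dvd (Polynomial.map_dvd _ hq'q))
  -- the subspaces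
  set Em := LinearMap.ker (Polynomial.aeval T f) with hEm
  set Ep := LinearMap.ker (Polynomial.aeval T g) with hEp
  have hfgT : Polynomial.aeval T (f * g) = 0 := by
    obtain ⟨s, hs⟩ := hassoc.symm.dvd
    rw [hs, map_mul, LinearMap.aeval_self_charpoly, zero_mul]
  have hcompl : IsCompl Em Ep := by
    constructor
    · exact Polynomial.disjoint_ker_aeval_of_isCoprime T hcop
    · rw [codisjoint_iff, hEm, hEp,
        Polynomial.sup_ker_aeval_eq_ker_aeval_mul_of_coprime T hcop, hfgT]
      exact LinearMap.ker_zero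
  -- invariance
  have hinv : ∀ q : ℝ[X],
      (LinearMap.ker (Polynomial.aeval T q)).map T = LinearMap.ker (Polynomial.aeval T q) := by
    intro q
    have hcomm : ∀ v : V, Polynomial.aeval T q (T v) = T (Polynomial.aeval T q v) := by
      intro v
      have h1 : Polynomial.aeval T q * T = T * Polynomial.aeval T q := by
        calc Polynomial.aeval T q * T = Polynomial.aeval T (q * X) := by
              rw [map_mul, Polynomial.aeval_X]
          _ = Polynomial.aeval T (X * q) := by rw [mul_comm]
          _ = T * Polynomial.aeval T q := by rw [map_mul, Polynomial.aeval_X]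
      calc Polynomial.aeval T q (T v) = (Polynomial.aeval T q * T) v := rfl
        _ = (T * Polynomial.aeval T q) v := by rw [h1]
        _ = T (Polynomial.aeval T q v) := rfl
    apply le_antisymm
    · rintro _ ⟨v, hv, rfl⟩
      simp only [SetLike.mem_coe, LinearMap.mem_ker] at hv ⊢
      rw [hcomm v, hv, map_zero]
    · intro v hv
      simp only [SetLike.mem_coe, LinearMap.mem_ker] at hv
      refine ⟨A.symm v, ?_, A.apply_symm_apply v⟩
      simp only [SetLike.mem_coe, LinearMap.mem_ker]
      apply A.injective
      have h2 : T (A.symm v) = v := A.apply_symm_apply v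
      have h3 : T (Polynomial.aeval T q (A.symm v)) = Polynomial.aeval T q v := by
        rw [← hcomm, h2]
      rw [map_zero]
      calc (A : V →ₗ[ℝ] V) (Polynomial.aeval T q (A.symm v))
          = T (Polynomial.aeval T q (A.symm v)) := rfl
        _ = Polynomial.aeval T q v := h3
        _ = 0 := hv
  -- restrictions
  have hTmem : ∀ x ∈ Em, T x ∈ Em := by
    intro x hx
    rw [hEm] at hx ⊢
    rw [← hinv f]
    exact Submodule.mem_map_of_mem hx
  have hTpmem : ∀ x ∈ Ep, T x ∈ Ep := by
    intro x hx
    rw [hEp] at hx ⊢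
    rw [← hinv g]
    exact Submodule.mem_map_of_mem hx
  set Tm : Em →ₗ[ℝ] Em := T.restrict hTmem with hTm
  set Tp : Ep →ₗ[ℝ] Ep := T.restrict hTpmem with hTp
  have hTm0 : Polynomial.aeval Tm f = 0 := by
    apply LinearMap.ext
    intro x
    apply Subtype.ext
    rw [hTm]
    rw [aux_aeval_restrict T hTmem f x]
    have hx : (x : V) ∈ LinearMap.ker (Polynomial.aeval T f) := x.2
    rw [LinearMap.mem_ker] at hx
    simpa using hx
  have hTp0 : Polynomial.aeval Tp g = 0 := by
    apply LinearMap.ext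
    intro x
    apply Subtype.ext
    rw [hTp]
    rw [aux_aeval_restrict T hTpmem g x]
    have hx : (x : V) ∈ LinearMap.ker (Polynomial.aeval T g) := x.2
    rw [LinearMap.mem_ker] at hx
    simpa using hx
  -- contraction on Em
  have hTm_eig : ∀ z : ℂ, Module.End.HasEigenvalue (Tm.baseChange ℂ) z → ‖z‖ < 1 :=
    fun z hz => hfroots z (aux_eigen_root Tm f hTm0 hz)
  have hEmBound := aux_contract Tm hTm_eig
  -- expansion on Ep via the inverse
  have hTpinj : Function.Injective Tp := by
    intro x y hxy
    have h1 : T (x : V) = T (y : V) := by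
      have := congrArg (Subtype.val) hxy
      simpa [hTp, LinearMap.restrict_apply] using this
    have hinj : Function.Injective T := A.injective
    exact Subtype.ext (hinj h1)
  have hTpbij : Function.Bijective Tp :=
    ⟨hTpinj, (LinearMap.injective_iff_surjective (f := Tp)).1 hTpinj⟩
  set Teq : Ep ≃ₗ[ℝ] Ep := LinearEquiv.ofBijective Tp hTpbij with hTeq
  set U : Ep →ₗ[ℝ] Ep := (Teq.symm : Ep →ₗ[ℝ] Ep) with hU
  have hUTlin : U ∘ₗ Tp = LinearMap.id := by
    apply LinearMap.ext
    intro x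
    have : Teq.symm (Teq x) = x := Teq.symm_apply_apply x
    simpa [hU, hTeq, LinearEquiv.ofBijective_apply] using this
  have hTUlin : Tp ∘ₗ U = LinearMap.id := by
    apply LinearMap.ext
    intro x
    have h1 : Teq (Teq.symm x) = x := Teq.apply_symm_apply x
    have h2 : Teq (Teq.symm x) = Tp (Teq.symm x) := rfl
    rw [h2] at h1
    simpa [hU] using h1
  have hU_eig : ∀ z : ℂ, Module.End.HasEigenvalue (U.baseChange ℂ) z → ‖z‖ < 1 := by
    intro z hz
    have hbUT : (Tp.baseChange ℂ) ∘ₗ (U.baseChange ℂ) = LinearMap.id := by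
      rw [← LinearMap.baseChange_comp, hTUlin, LinearMap.baseChange_id]
    obtain ⟨x, hx, hx0⟩ := hz.exists_hasEigenvector
    have hxeq : (U.baseChange ℂ) x = z • x := Module.End.mem_eigenspace_iff.1 hx
    have hTUx : (Tp.baseChange ℂ) ((U.baseChange ℂ) x) = x := by
      have := congrArg (fun (φ : (ℂ ⊗[ℝ] Ep) →ₗ[ℂ] (ℂ ⊗[ℝ] Ep)) => φ x) hbUT
      simpa using this
    have hz0 : z ≠ 0 := by
      intro h0
      rw [h0, zero_smul] at hxeq
      rw [hxeq, map_zero] at hTUx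
      exact hx0 hTUx.symm
    have hTpx : (Tp.baseChange ℂ) x = z⁻¹ • x := by
      rw [hxeq, map_smul] at hTUx
      calc (Tp.baseChange ℂ) x
          = z⁻¹ • (z • (Tp.baseChange ℂ) x) := by
            rw [smul_smul, inv_mul_cancel₀ hz0, one_smul]
        _ = z⁻¹ • x := by rw [hTUx]
    have heigTp : Module.End.HasEigenvalue (Tp.baseChange ℂ) z⁻¹ :=
      Module.End.hasEigenvalue_of_hasEigenvector
        ⟨Module.End.mem_eigenspace_iff.2 hTpx, hx0⟩
    have hroot' := hgroots z⁻¹ (aux_eigen_root Tp g hTp0 heigTp)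
    rw [norm_inv] at hroot'
    exact (one_lt_inv_iff₀.1 hroot').2
  have hEpBound := aux_contract U hU_eig
  -- powers of restrictions
  have hTmpow : ∀ (p : ℕ) (x : Em), (((Tm ^ p) x : Em) : V) = (T ^ p) (x : V) := by
    intro p x
    rw [hTm, Module.End.pow_restrict]
    rfl
  have hTppow : ∀ (p : ℕ) (x : Ep), (((Tp ^ p) x : Ep) : V) = (T ^ p) (x : V) := by
    intro p x
    rw [hTp, Module.End.pow_restrict]
    rfl
  have hUTpow : ∀ (p : ℕ) (x : Ep), (U ^ p) ((Tp ^ p) x) = x := by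
    intro p
    induction p with
    | zero => intro x; simp
    | succ q ih =>
      intro x
      have hUT1 : ∀ y : Ep, U (Tp y) = y := by
        intro y
        have := congrArg (fun (φ : Ep →ₗ[ℝ] Ep) => φ y) hUTlin
        simpa using this
      have e1 : (Tp ^ (q+1)) x = Tp ((Tp ^ q) x) := by
        rw [pow_succ', Module.End.mul_apply]
      have e2 : (U ^ (q+1)) (Tp ((Tp ^ q) x)) = (U ^ q) (U (Tp ((Tp ^ q) x))) := by
        rw [pow_succ, Module.End.mul_apply]
      rw [e1, e2, hUT1, ih]
  obtain ⟨p₁, hp₁⟩ := Filter.eventually_atTop.1 hEmBound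
  obtain ⟨p₂, hp₂⟩ := Filter.eventually_atTop.1 hEpBound
  refine ⟨Em, Ep, max (max p₁ p₂) 1, ?_, hcompl, hinv f, hinv g, ?_⟩
  · exact lt_of_lt_of_le one_pos (le_max_right _ _)
  intro p hp
  have hpp₁ : p₁ ≤ p := le_trans (le_trans (le_max_left _ _) (le_max_left _ _)) hp
  have hpp₂ : p₂ ≤ p := le_trans (le_trans (le_max_right _ _) (le_max_left _ _)) hp
  constructor
  · intro v hv
    have h1 := hp₁ p hpp₁ ⟨v, hv⟩
    have h2 : (((Tm ^ p) ⟨v, hv⟩ : Em) : V) = (T ^ p) v := hTmpow p ⟨v, hv⟩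
    have h3 : ‖(T ^ p) v‖ ≤ (1/2) * ‖v‖ := by
      rw [← h2]
      exact h1
    exact h3
  · intro v hv
    set x : Ep := ⟨v, hv⟩ with hx
    have h1 := hp₂ p hpp₂ ((Tp ^ p) x)
    rw [hUTpow p x] at h1
    have h2 : ‖(x : V)‖ ≤ (1/2) * ‖((Tp ^ p) x : V)‖ := h1
    have h3 : ((Tp ^ p) x : V) = (T ^ p) v := hTppow p x
    rw [h3] at h2
    have h4 : ‖(x : V)‖ = ‖v‖ := rfl
    rw [h4] at h2
    linarith
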